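/- Möbius covariance of the Cauchy family: let Φ(z) = (αz + β)/(γz + δ) with real coefficients and αδ − βγ = 1, and let w ∈ ℂ with Im(w) > 0. For all real z' not equal to the pole α/γ of Φ⁻¹, the pointwise density identity ρ_w(Φ⁻¹(z'))·|dΦ⁻¹/dz'(z')| = ρ_{Φ(w)}(z') holds, where ρ_w(z) = (1/π)·Im(w)/|z − w|². -/

import Mathlib

/-- Möbius covariance of the Cauchy family: pointwise density identity. -/
theorem cauchy_density_mobius_covariance (α β γ δ : ℝ)
    (hdet : α * δ - β * γ = 1) (w : ℂ) (hw : 0 < w.im)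
    (z' : ℝ) (hz' : -γ * z' + α ≠ 0) :
    (1 / Real.pi) * w.im /
        ‖((((δ * z' - β) / (-γ * z' + α) : ℝ)) : ℂ) - w‖ ^ 2
        * |1 / (-γ * z' + α) ^ 2|
      = (1 / Real.pi) * (((α : ℂ) * w + β) / ((γ : ℂ) * w + δ)).im /
          ‖(z' : ℂ) - ((α : ℂ) * w + β) / ((γ : ℂ) * w + δ)‖ ^ 2 := by
  set c : ℂ := (γ : ℂ) * w + δ with hc_def
  have hc : c ≠ 0 := by
    intro h
    have him : c.im = γ * w.im := by simp [hc_def]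
    have hγ : γ = 0 := by
      have := congrArg Complex.im h
      rw [him] at this
      simp at this
      rcases this with h' | h'
      · exact h'
      · exact absurd h' (ne_of_gt hw)
    have hre : c.re = γ * w.re + δ := by simp [hc_def]
    have hδ : δ = 0 := by
      have := congrArg Complex.re h
      rw [hre, hγ] at this; simpa using this
    rw [hγ, hδ] at hdet; simp at hdet
  have ha : ((-γ * z' + α : ℝ) : ℂ) ≠ 0 := by exact_mod_cast hz'
  have hnc : Complex.normSq c ≠ 0 := by simpa using hc
  have him : (((α : ℂ) * w + β) / c).im = w.im / Complex.normSq c := by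
    rw [Complex.div_im]
    have h1 : ((α : ℂ) * w + β).im = α * w.im := by simp
    have h2 : ((α : ℂ) * w + β).re = α * w.re + β := by simp
    have h3 : c.im = γ * w.im := by simp [hc_def]
    have h4 : c.re = γ * w.re + δ := by simp [hc_def]
    rw [h1, h2, h3, h4]
    field_simp
    ring_nf
    nlinarith [hdet]
  have hkey : ((((δ * z' - β) / (-γ * z' + α) : ℝ)) : ℂ) - w
      = ((z' : ℂ) - ((α : ℂ) * w + β) / c) * c / ((-γ * z' + α : ℝ) : ℂ) := by
    rw [eq_div_iff ha, Complex.ofReal_div, sub_mul, div_mul_cancel₀ _ ha,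
      sub_mul, div_mul_cancel₀ _ hc]
    push_cast
    ring
  have himpos : 0 < (((α : ℂ) * w + β) / c).im := by
    rw [him]
    exact div_pos hw (lt_of_le_of_ne (Complex.normSq_nonneg c) (Ne.symm hnc))
  have hne : (z' : ℂ) - ((α : ℂ) * w + β) / c ≠ 0 := by
    intro h
    have heq : ((α : ℂ) * w + β) / c = (z' : ℂ) := by linear_combination -h
    rw [heq] at himpos
    simp at himpos
  rw [hkey]
  rw [norm_div, norm_mul]
  have habsc : ‖c‖ ^ 2 = Complex.normSq c := Complex.sq_norm c
  have habsa : ‖((-γ * z' + α : ℝ) : ℂ)‖ = |(-γ * z' + α : ℝ)| :=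
    (Complex.norm_real _).trans (Real.norm_eq_abs _)
  rw [habsa, him]
  have h1 : ‖(z' : ℂ) - ((α : ℂ) * w + β) / c‖ ≠ 0 :=
    (norm_ne_zero_iff.mpr hne)
  have h2 : ‖c‖ ≠ 0 := norm_ne_zero_iff.mpr hc
  have h3 : |(-γ * z' + α : ℝ)| ≠ 0 := abs_ne_zero.mpr hz'
  rw [div_pow, mul_pow]
  have h4 : |1 / (-γ * z' + α) ^ 2| = 1 / (-γ * z' + α) ^ 2 := abs_of_pos (by positivity)
  have h5 : |-γ * z' + α| ^ 2 = (-γ * z' + α) ^ 2 := sq_abs _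
  rw [h4, h5, ← habsc]
  have h6 : (-γ * z' + α) ^ 2 ≠ 0 := pow_ne_zero _ hz'
  set A := ‖(z' : ℂ) - ((α : ℂ) * w + β) / c‖ with hA
  set C := ‖c‖ with hC
  set a2 : ℝ := (-γ * z' + α) ^ 2 with ha2d
  field_simp
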